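/- Let c be a simple-model cost function on the infinite grid graph G with l layers, let T ⊆ V be a nonempty union of finitely many axis-parallel rectangles each lying on a single layer, and let ξ¹ ≤ … ≤ ξ^p and υ¹ ≤ … ≤ υ^q be integer coordinates such that each of these rectangles is of the form {(x, y, ζ) ∈ V : ξ^{i⁻} ≤ x ≤ ξ^{i⁺}, υ^{j⁻} ≤ y ≤ υ^{j⁺}} for suitable indices i⁻, i⁺, j⁻, j⁺ and a layer ζ. Then for every i ∈ {0, …, p}, j ∈ {0, …, q} and z ∈ {1, …, l} (with ξ⁰ = −∞, ξ^{p+1} = ∞, υ⁰ = −∞, υ^{q+1} = ∞) there exists a set F of at most 1 + 4l + 4l² affine functions f : ℝ² → ℝ such that dist_{(G,c)}((x, y, z), T) = min{f(x, y) : f ∈ F} for every vertex (x, y, z) ∈ V with ξ^i ≤ x ≤ ξ^{i+1} and υ^j ≤ y ≤ υ^{j+1}. -/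

import Mathlib

/-- Vertices of the infinite grid graph: `(x, y, z)` where `z` is the layer. -/
abbrev Vtx : Type := ℤ × ℤ × ℤ

/-- Two vertices of the infinite grid graph with layers `1, …, l` are adjacent iff both have
their layer coordinate in `{1, …, l}` and they differ by exactly `1` in exactly one
coordinate.  An edge changing the first coordinate is horizontal, one changing the second
coordinate is vertical, and one changing the third coordinate is a via. -/
def Adj (l : ℤ) (u v : Vtx) : Prop :=
  1 ≤ u.2.2 ∧ u.2.2 ≤ l ∧ 1 ≤ v.2.2 ∧ v.2.2 ≤ l ∧
    |u.1 - v.1| + |u.2.1 - v.2.1| + |u.2.2 - v.2.2| = 1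

/-- Simple-model edge cost: a horizontal (resp. vertical) edge on layer `z` costs `ch z`
(resp. `cv z`) and a via between layers `z` and `z+1` costs `cvia z`. -/
def ecost (ch cv cvia : ℤ → ℝ) (u v : Vtx) : ℝ :=
  if u.1 ≠ v.1 then ch u.2.2
  else if u.2.1 ≠ v.2.1 then cv u.2.2
  else cvia (min u.2.2 v.2.2)

/-- The cost of a walk (given as the list of its vertices) is the sum of its edge costs. -/
def wcost (c : Vtx → Vtx → ℝ) : List Vtx → ℝ
  | [] => 0
  | [_] => 0
  | u :: v :: P => c u v + wcost c (v :: P)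

/-- `P` is a walk from `u` to `v` with respect to the adjacency relation `A`. -/
def IsWalkA (A : Vtx → Vtx → Prop) (P : List Vtx) (u v : Vtx) : Prop :=
  P ≠ [] ∧ P.Chain' A ∧ P.head? = some u ∧ P.getLast? = some v

/-- The distance between two vertices: the infimum cost of a walk between them. -/
noncomputable def gdistA (A : Vtx → Vtx → Prop) (c : Vtx → Vtx → ℝ) (u v : Vtx) : ℝ :=
  sInf { m : ℝ | ∃ P, IsWalkA A P u v ∧ wcost c P = m }

/-- The distance from a vertex to a set of vertices. -/
noncomputable def gdistSetA (A : Vtx → Vtx → Prop) (c : Vtx → Vtx → ℝ) (u : Vtx)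
    (T : Set Vtx) : ℝ :=
  sInf { m : ℝ | ∃ P v, v ∈ T ∧ IsWalkA A P u v ∧ wcost c P = m }

/-- `inSeg n ξ i x` states that the coordinate `x` lies in the `i`-th interval
`[ξ^i, ξ^{i+1}]` of the rectilinear grid given by `ξ¹ ≤ … ≤ ξ^n`
(with the conventions `ξ⁰ = −∞` and `ξ^{n+1} = ∞`). -/
def inSeg (n : ℕ) (ξ : ℕ → ℤ) (i : ℕ) (x : ℤ) : Prop :=
  (i = 0 ∨ ξ i ≤ x) ∧ (i = n ∨ x ≤ ξ (i + 1))

/-- General-model edge cost: an edge lying in the tile with indices `(i, j, z)` costs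
`ch i j z`, `cv i j z` or `cvia i j z` according to its direction (for a via between layers
`z` and `z+1` the lower layer `z` is used), and an edge lying in more than one tile gets the
minimum of the applicable costs. -/
noncomputable def gecost (p q : ℕ) (ξ υ : ℕ → ℤ) (ch cv cvia : ℕ → ℕ → ℤ → ℝ)
    (u v : Vtx) : ℝ :=
  sInf { m : ℝ | ∃ i j : ℕ, i ≤ p ∧ j ≤ q ∧
    inSeg p ξ i u.1 ∧ inSeg p ξ i v.1 ∧ inSeg q υ j u.2.1 ∧ inSeg q υ j v.2.1 ∧
    m = if u.1 ≠ v.1 then ch i j u.2.2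
        else if u.2.1 ≠ v.2.1 then cv i j u.2.2
        else cvia i j (min u.2.2 v.2.2) }

/-- The rectangle with corner grid indices `i₁, i₂` (in x), `j₁, j₂` (in y), on layer `ζ`. -/
def GridRect (ξ υ : ℕ → ℤ) (i₁ i₂ j₁ j₂ : ℕ) (ζ : ℤ) : Set Vtx :=
  { w | ξ i₁ ≤ w.1 ∧ w.1 ≤ ξ i₂ ∧ υ j₁ ≤ w.2.1 ∧ w.2.1 ≤ υ j₂ ∧ w.2.2 = ζ }

/-- `T` is consistent with the grid: it is a finite union of rectangles whose corner
coordinates are grid coordinates `ξ^{i⁻} ≤ x ≤ ξ^{i⁺}`, `υ^{j⁻} ≤ y ≤ υ^{j⁺}` with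
`1 ≤ i⁻ ≤ i⁺ ≤ p`, `1 ≤ j⁻ ≤ j⁺ ≤ q`, each on a single layer `ζ ∈ {1, …, l}`. -/
def Consistent (p q : ℕ) (ξ υ : ℕ → ℤ) (l : ℤ) (T : Set Vtx) : Prop :=
  ∃ R : Finset ((ℕ × ℕ) × (ℕ × ℕ) × ℤ),
    (∀ r ∈ R, 1 ≤ r.1.1 ∧ r.1.1 ≤ r.1.2 ∧ r.1.2 ≤ p ∧
       1 ≤ r.2.1.1 ∧ r.2.1.1 ≤ r.2.1.2 ∧ r.2.1.2 ≤ q ∧ 1 ≤ r.2.2 ∧ r.2.2 ≤ l) ∧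
    T = ⋃ r ∈ R, GridRect ξ υ r.1.1 r.1.2 r.2.1.1 r.2.1.2 r.2.2

section Walks

variable {A : Vtx → Vtx → Prop} {c : Vtx → Vtx → ℝ}

lemma wcost_cons (c : Vtx → Vtx → ℝ) (a b : Vtx) (L : List Vtx) (hb : L.head? = some b) :
    wcost c (a :: L) = c a b + wcost c L := by
  cases L with
  | nil => simp at hb
  | cons x t => simp at hb; subst hb; rfl

lemma wcost_append (c : Vtx → Vtx → ℝ) :
    ∀ (P : List Vtx) (w : Vtx) (Q : List Vtx), P.getLast? = some w →
      wcost c (P ++ Q) = wcost c P + wcost c (w :: Q) := by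
  intro P
  induction P with
  | nil => intro w Q h; simp at h
  | cons a t ih =>
    intro w Q h
    cases t with
    | nil =>
      simp only [List.getLast?_singleton, Option.some.injEq] at h
      subst h; simp [wcost]
    | cons b t' =>
      rw [List.getLast?_cons_cons] at h
      have := ih w Q h
      simp only [List.cons_append] at *
      rw [wcost, wcost, this]; ring

lemma walk_glue {P Q : List Vtx} {u w v : Vtx}
    (hP : IsWalkA A P u w) (hQ : IsWalkA A Q w v) :
    IsWalkA A (P ++ Q.tail) u v ∧ wcost c (P ++ Q.tail) = wcost c P + wcost c Q := by
  obtain ⟨hP0, hPc, hPh, hPl⟩ := hP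
  obtain ⟨hQ0, hQc, hQh, hQl⟩ := hQ
  cases Q with
  | nil => simp at hQ0
  | cons b Q' =>
    simp only [List.head?_cons, Option.some.injEq] at hQh
    subst hQh
    have hcost := wcost_append c P b Q' hPl
    constructor
    · refine ⟨by simp [hP0], ?_, ?_, ?_⟩
      · apply List.IsChain.append hPc (List.isChain_cons.mp hQc).2
        intro x hx y hy
        rw [hPl] at hx; simp at hx; subst hx
        exact (List.isChain_cons.mp hQc).1 y hy
      · cases P with
        | nil => simp at hP0
        | cons a t => simpa using hPh
      · cases Q' with
        | nil => simpa [hPl] using hQl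
        | cons c' t' =>
          rw [List.getLast?_append_of_ne_nil P (by simp)]
          simpa using hQl
    · simpa [wcost] using hcost

/-- a straight ray of `n` steps in direction `δ`. -/
def ray (δ : Vtx) : Vtx → ℕ → List Vtx
  | u, 0 => [u]
  | u, n + 1 => u :: ray δ (u + δ) n

lemma step_eq (u δ : Vtx) (k : ℕ) : u + δ + k • δ = u + (k + 1) • δ := by
  rw [succ_nsmul]; abel

lemma ray_head? (δ u : Vtx) (n : ℕ) : (ray δ u n).head? = some u := by
  cases n <;> rfl

lemma ray_ne_nil (δ u : Vtx) (n : ℕ) : ray δ u n ≠ [] := by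
  cases n <;> simp [ray]

lemma ray_getLast? (δ : Vtx) : ∀ (n : ℕ) (u : Vtx),
    (ray δ u n).getLast? = some (u + n • δ) := by
  intro n
  induction n with
  | zero => intro u; simp [ray]
  | succ m ih =>
    intro u
    cases m with
    | zero => simp [ray, one_nsmul]
    | succ k =>
      show (u :: ray δ (u + δ) (k+1)).getLast? = _
      have h1 : ray δ (u + δ) (k + 1) = (u + δ) :: ray δ (u + δ + δ) k := rfl
      rw [h1, List.getLast?_cons_cons, ← h1, ih (u + δ), step_eq]

lemma ray_chain' (δ : Vtx) : ∀ (n : ℕ) (u : Vtx),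
    (∀ k : ℕ, k < n → A (u + k • δ) (u + (k + 1) • δ)) → (ray δ u n).Chain' A := by
  intro n
  induction n with
  | zero => intro u _; exact List.isChain_singleton u
  | succ m ih =>
    intro u h
    show List.Chain' A (u :: ray δ (u + δ) m)
    rw [show List.Chain' A (u :: ray δ (u + δ) m) = List.IsChain A (u :: ray δ (u + δ) m) from rfl,
      List.isChain_cons]
    constructor
    · intro y hy
      rw [ray_head?] at hy
      simp at hy; subst hy
      simpa using h 0 (Nat.succ_pos m)
    · apply ih
      intro k hk
      rw [step_eq, step_eq]
      exact h (k + 1) (by omega)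

lemma ray_wcost (c : Vtx → Vtx → ℝ) (δ : Vtx) : ∀ (n : ℕ) (u : Vtx),
    wcost c (ray δ u n) = ∑ k ∈ Finset.range n, c (u + k • δ) (u + (k + 1) • δ) := by
  intro n
  induction n with
  | zero => intro u; simp [ray, wcost]
  | succ m ih =>
    intro u
    show wcost c (u :: ray δ (u + δ) m) = _
    rw [wcost_cons c u (u + δ) _ (ray_head? _ _ _), ih]
    rw [Finset.sum_range_succ']
    simp only [zero_nsmul, add_zero, zero_add, one_nsmul]
    rw [add_comm]
    congr 1
    apply Finset.sum_congr rfl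
    intro k _
    rw [step_eq, step_eq]

end Walks
section Model

variable (l : ℤ) (ch cv cvia : ℤ → ℝ)

/-- cumulative via cost below layer `z`. -/
noncomputable def Scum (z : ℤ) : ℝ := ∑ k ∈ Finset.Ico (1 : ℤ) z, cvia k

/-- via distance between two layers. -/
noncomputable def Vv (a b : ℤ) : ℝ := |Scum cvia a - Scum cvia b|

lemma Scum_succ {z : ℤ} (hz : 1 ≤ z) : Scum cvia (z + 1) = Scum cvia z + cvia z := by
  unfold Scum
  rw [← Finset.Ico_union_Ico_eq_Ico hz (by omega : z ≤ z + 1),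
    Finset.sum_union (Finset.Ico_disjoint_Ico_consecutive _ _ _),
    show Finset.Ico z (z + 1) = {z} from by ext k; simp [Finset.mem_Ico]; omega,
    Finset.sum_singleton]

lemma Vv_self (a : ℤ) : Vv cvia a a = 0 := by simp [Vv]

lemma Vv_comm (a b : ℤ) : Vv cvia a b = Vv cvia b a := abs_sub_comm _ _

lemma Vv_nonneg (a b : ℤ) : 0 ≤ Vv cvia a b := abs_nonneg _

lemma Vv_tri (a b c : ℤ) : Vv cvia a c ≤ Vv cvia a b + Vv cvia b c :=
  abs_sub_le _ _ _

variable {l} in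
lemma Scum_mono (hc0 : ∀ k, 1 ≤ k → k < l → 0 ≤ cvia k) {a b : ℤ}
    (h1 : 1 ≤ a) (hab : a ≤ b) (h2 : b ≤ l) : Scum cvia a ≤ Scum cvia b := by
  unfold Scum
  rw [← Finset.Ico_union_Ico_eq_Ico h1 hab,
    Finset.sum_union (Finset.Ico_disjoint_Ico_consecutive _ _ _)]
  have : 0 ≤ ∑ k ∈ Finset.Ico a b, cvia k := by
    apply Finset.sum_nonneg
    intro k hk
    simp only [Finset.mem_Ico] at hk
    exact hc0 k (le_trans h1 hk.1) (lt_of_lt_of_le hk.2 h2)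
  linarith

variable {l} in
lemma Vv_eq_of_le (hc0 : ∀ k, 1 ≤ k → k < l → 0 ≤ cvia k) {a b : ℤ}
    (h1 : 1 ≤ a) (hab : a ≤ b) (h2 : b ≤ l) :
    Vv cvia a b = Scum cvia b - Scum cvia a := by
  unfold Vv
  rw [abs_sub_comm, abs_of_nonneg (by linarith [Scum_mono cvia hc0 h1 hab h2])]

variable {l} in
lemma cvia_min_eq_Vv (hc0 : ∀ k, 1 ≤ k → k < l → 0 ≤ cvia k) {a b : ℤ}
    (ha1 : 1 ≤ a) (ha2 : a ≤ l) (hb1 : 1 ≤ b) (hb2 : b ≤ l) (hab : |a - b| = 1) :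
    cvia (min a b) = Vv cvia a b := by
  rcases abs_cases (a - b) with ⟨h1, _⟩ | ⟨h1, _⟩
  · -- a = b + 1
    have hb : a = b + 1 := by omega
    subst hb
    rw [min_eq_right (by omega), Vv_comm,
      Vv_eq_of_le cvia hc0 hb1 (by omega) ha2, Scum_succ cvia hb1]
    ring
  · have ha : b = a + 1 := by omega
    subst ha
    rw [min_eq_left (by omega),
      Vv_eq_of_le cvia hc0 ha1 (by omega) hb2, Scum_succ cvia ha1]
    ring

lemma sum_cvia_up (z : ℤ) (hz : 1 ≤ z) (n : ℕ) :
    ∑ k ∈ Finset.range n, cvia (z + k) = Scum cvia (z + n) - Scum cvia z := by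
  induction n with
  | zero => simp
  | succ m ih =>
    rw [Finset.sum_range_succ, ih]
    have h1 : (1 : ℤ) ≤ z + m := by omega
    have : Scum cvia (z + (m + 1 : ℕ)) = Scum cvia (z + m) + cvia (z + m) := by
      have := Scum_succ cvia h1
      convert this using 2 <;> push_cast <;> ring
    rw [this]; ring

lemma sum_cvia_down (z : ℤ) (n : ℕ) (hzn : 1 ≤ z - n) :
    ∑ k ∈ Finset.range n, cvia (z - k - 1) = Scum cvia z - Scum cvia (z - n) := by
  induction n with
  | zero => simp
  | succ m ih =>
    have h1 : (1 : ℤ) ≤ z - m - 1 := by push_cast at hzn ⊢; omega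
    rw [Finset.sum_range_succ, ih (by push_cast at hzn ⊢; omega)]
    have : Scum cvia (z - m) = Scum cvia (z - m - 1) + cvia (z - m - 1) := by
      have := Scum_succ cvia h1
      convert this using 2 <;> push_cast <;> ring
    have h2 : z - (m + 1 : ℕ) = z - m - 1 := by push_cast; ring
    rw [h2, this]; ring

variable {l}

lemma exists_walkX (x y z x' : ℤ) (hz1 : 1 ≤ z) (hz2 : z ≤ l) :
    ∃ P, IsWalkA (Adj l) P (x, y, z) (x', y, z) ∧
      wcost (ecost ch cv cvia) P = (|x' - x| : ℤ) * ch z := by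
  rcases le_total x x' with h | h
  · refine ⟨ray (1, 0, 0) (x, y, z) (x' - x).toNat, ⟨ray_ne_nil _ _ _, ?_, ray_head? _ _ _, ?_⟩, ?_⟩
    · apply ray_chain'
      intro k _
      have e1 : ((x,y,z) : Vtx) + k • (((1:ℤ),(0:ℤ),(0:ℤ)) : Vtx) = (x + k, y, z) := by
        simp [Prod.ext_iff]
      have e2 : ((x,y,z) : Vtx) + (k+1) • (((1:ℤ),(0:ℤ),(0:ℤ)) : Vtx) = (x + k + 1, y, z) := by
        simp [Prod.ext_iff]; ring
      rw [e1, e2]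
      refine ⟨hz1, hz2, hz1, hz2, ?_⟩
      simp
    · rw [ray_getLast?]
      have : ((x,y,z) : Vtx) + ((x' - x).toNat) • (((1:ℤ),(0:ℤ),(0:ℤ)) : Vtx) = (x', y, z) := by
        simp [Prod.ext_iff]; omega
      rw [this]
    · rw [ray_wcost]
      have : ∀ k ∈ Finset.range (x' - x).toNat,
          ecost ch cv cvia ((x,y,z) + k • (((1:ℤ),(0:ℤ),(0:ℤ)) : Vtx))
            ((x,y,z) + (k+1) • (((1:ℤ),(0:ℤ),(0:ℤ)) : Vtx)) = ch z := by
        intro k _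
        have e1 : ((x,y,z) : Vtx) + k • (((1:ℤ),(0:ℤ),(0:ℤ)) : Vtx) = (x + k, y, z) := by
          simp [Prod.ext_iff]
        have e2 : ((x,y,z) : Vtx) + (k+1) • (((1:ℤ),(0:ℤ),(0:ℤ)) : Vtx) = (x + k + 1, y, z) := by
          simp [Prod.ext_iff]; ring
        rw [e1, e2]
        unfold ecost
        rw [if_pos (by omega)]
      rw [Finset.sum_congr rfl this, Finset.sum_const, Finset.card_range, nsmul_eq_mul]
      congr 1
      rw [show |x' - x| = ((x' - x).toNat : ℤ) from by
        rw [abs_of_nonneg (by omega : (0:ℤ) ≤ x' - x)]; omega]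
      push_cast
      ring
  · refine ⟨ray (-1, 0, 0) (x, y, z) (x - x').toNat, ⟨ray_ne_nil _ _ _, ?_, ray_head? _ _ _, ?_⟩, ?_⟩
    · apply ray_chain'
      intro k _
      have e1 : ((x,y,z) : Vtx) + k • (((-1:ℤ),(0:ℤ),(0:ℤ)) : Vtx) = (x - k, y, z) := by
        simp [Prod.ext_iff]; ring
      have e2 : ((x,y,z) : Vtx) + (k+1) • (((-1:ℤ),(0:ℤ),(0:ℤ)) : Vtx) = (x - k - 1, y, z) := by
        simp [Prod.ext_iff]; ring
      rw [e1, e2]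
      refine ⟨hz1, hz2, hz1, hz2, ?_⟩
      simp
    · rw [ray_getLast?]
      have : ((x,y,z) : Vtx) + ((x - x').toNat) • (((-1:ℤ),(0:ℤ),(0:ℤ)) : Vtx) = (x', y, z) := by
        simp [Prod.ext_iff]; omega
      rw [this]
    · rw [ray_wcost]
      have : ∀ k ∈ Finset.range (x - x').toNat,
          ecost ch cv cvia ((x,y,z) + k • (((-1:ℤ),(0:ℤ),(0:ℤ)) : Vtx))
            ((x,y,z) + (k+1) • (((-1:ℤ),(0:ℤ),(0:ℤ)) : Vtx)) = ch z := by
        intro k _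
        have e1 : ((x,y,z) : Vtx) + k • (((-1:ℤ),(0:ℤ),(0:ℤ)) : Vtx) = (x - k, y, z) := by
          simp [Prod.ext_iff]; ring
        have e2 : ((x,y,z) : Vtx) + (k+1) • (((-1:ℤ),(0:ℤ),(0:ℤ)) : Vtx) = (x - k - 1, y, z) := by
          simp [Prod.ext_iff]; ring
        rw [e1, e2]
        unfold ecost
        rw [if_pos (by omega)]
      rw [Finset.sum_congr rfl this, Finset.sum_const, Finset.card_range, nsmul_eq_mul]
      congr 1
      rw [show |x' - x| = ((x - x').toNat : ℤ) from by
        rw [abs_of_nonpos (by omega : x' - x ≤ (0:ℤ))]; omega]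
      push_cast
      ring

lemma exists_walkY (x y z y' : ℤ) (hz1 : 1 ≤ z) (hz2 : z ≤ l) :
    ∃ P, IsWalkA (Adj l) P (x, y, z) (x, y', z) ∧
      wcost (ecost ch cv cvia) P = (|y' - y| : ℤ) * cv z := by
  rcases le_total y y' with h | h
  · refine ⟨ray (0, 1, 0) (x, y, z) (y' - y).toNat, ⟨ray_ne_nil _ _ _, ?_, ray_head? _ _ _, ?_⟩, ?_⟩
    · apply ray_chain'
      intro k _
      have e1 : ((x,y,z) : Vtx) + k • (((0:ℤ),(1:ℤ),(0:ℤ)) : Vtx) = (x, y + k, z) := by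
        simp [Prod.ext_iff]
      have e2 : ((x,y,z) : Vtx) + (k+1) • (((0:ℤ),(1:ℤ),(0:ℤ)) : Vtx) = (x, y + k + 1, z) := by
        simp [Prod.ext_iff]; ring
      rw [e1, e2]
      refine ⟨hz1, hz2, hz1, hz2, ?_⟩
      simp
    · rw [ray_getLast?]
      have : ((x,y,z) : Vtx) + ((y' - y).toNat) • (((0:ℤ),(1:ℤ),(0:ℤ)) : Vtx) = (x, y', z) := by
        simp [Prod.ext_iff]; omega
      rw [this]
    · rw [ray_wcost]
      have : ∀ k ∈ Finset.range (y' - y).toNat,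
          ecost ch cv cvia ((x,y,z) + k • (((0:ℤ),(1:ℤ),(0:ℤ)) : Vtx))
            ((x,y,z) + (k+1) • (((0:ℤ),(1:ℤ),(0:ℤ)) : Vtx)) = cv z := by
        intro k _
        have e1 : ((x,y,z) : Vtx) + k • (((0:ℤ),(1:ℤ),(0:ℤ)) : Vtx) = (x, y + k, z) := by
          simp [Prod.ext_iff]
        have e2 : ((x,y,z) : Vtx) + (k+1) • (((0:ℤ),(1:ℤ),(0:ℤ)) : Vtx) = (x, y + k + 1, z) := by
          simp [Prod.ext_iff]; ring
        rw [e1, e2]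
        unfold ecost
        rw [if_neg (by simp), if_pos (by show y + (k:ℤ) ≠ y + (k:ℤ) + 1; omega)]
      rw [Finset.sum_congr rfl this, Finset.sum_const, Finset.card_range, nsmul_eq_mul]
      congr 1
      rw [show |y' - y| = ((y' - y).toNat : ℤ) from by
        rw [abs_of_nonneg (by omega : (0:ℤ) ≤ y' - y)]; omega]
      push_cast
      ring
  · refine ⟨ray (0, -1, 0) (x, y, z) (y - y').toNat, ⟨ray_ne_nil _ _ _, ?_, ray_head? _ _ _, ?_⟩, ?_⟩
    · apply ray_chain'
      intro k _
      have e1 : ((x,y,z) : Vtx) + k • (((0:ℤ),(-1:ℤ),(0:ℤ)) : Vtx) = (x, y - k, z) := by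
        simp [Prod.ext_iff]; ring
      have e2 : ((x,y,z) : Vtx) + (k+1) • (((0:ℤ),(-1:ℤ),(0:ℤ)) : Vtx) = (x, y - k - 1, z) := by
        simp [Prod.ext_iff]; ring
      rw [e1, e2]
      refine ⟨hz1, hz2, hz1, hz2, ?_⟩
      simp
    · rw [ray_getLast?]
      have : ((x,y,z) : Vtx) + ((y - y').toNat) • (((0:ℤ),(-1:ℤ),(0:ℤ)) : Vtx) = (x, y', z) := by
        simp [Prod.ext_iff]; omega
      rw [this]
    · rw [ray_wcost]
      have : ∀ k ∈ Finset.range (y - y').toNat,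
          ecost ch cv cvia ((x,y,z) + k • (((0:ℤ),(-1:ℤ),(0:ℤ)) : Vtx))
            ((x,y,z) + (k+1) • (((0:ℤ),(-1:ℤ),(0:ℤ)) : Vtx)) = cv z := by
        intro k _
        have e1 : ((x,y,z) : Vtx) + k • (((0:ℤ),(-1:ℤ),(0:ℤ)) : Vtx) = (x, y - k, z) := by
          simp [Prod.ext_iff]; ring
        have e2 : ((x,y,z) : Vtx) + (k+1) • (((0:ℤ),(-1:ℤ),(0:ℤ)) : Vtx) = (x, y - k - 1, z) := by
          simp [Prod.ext_iff]; ring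
        rw [e1, e2]
        unfold ecost
        rw [if_neg (by simp), if_pos (by show y - (k:ℤ) ≠ y - (k:ℤ) - 1; omega)]
      rw [Finset.sum_congr rfl this, Finset.sum_const, Finset.card_range, nsmul_eq_mul]
      congr 1
      rw [show |y' - y| = ((y - y').toNat : ℤ) from by
        rw [abs_of_nonpos (by omega : y' - y ≤ (0:ℤ))]; omega]
      push_cast
      ring

lemma exists_walkZ (hc0 : ∀ k, 1 ≤ k → k < l → 0 ≤ cvia k) (x y z b : ℤ)
    (hz1 : 1 ≤ z) (hz2 : z ≤ l) (hb1 : 1 ≤ b) (hb2 : b ≤ l) :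
    ∃ P, IsWalkA (Adj l) P (x, y, z) (x, y, b) ∧
      wcost (ecost ch cv cvia) P = Vv cvia z b := by
  rcases le_total z b with h | h
  · refine ⟨ray (0, 0, 1) (x, y, z) (b - z).toNat, ⟨ray_ne_nil _ _ _, ?_, ray_head? _ _ _, ?_⟩, ?_⟩
    · apply ray_chain'
      intro k hk
      have hk' : (k : ℤ) < b - z := by omega
      have e1 : ((x,y,z) : Vtx) + k • (((0:ℤ),(0:ℤ),(1:ℤ)) : Vtx) = (x, y, z + k) := by
        simp [Prod.ext_iff]
      have e2 : ((x,y,z) : Vtx) + (k+1) • (((0:ℤ),(0:ℤ),(1:ℤ)) : Vtx) = (x, y, z + k + 1) := by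
        simp [Prod.ext_iff]; ring
      rw [e1, e2]
      refine ⟨show (1:ℤ) ≤ z + (k:ℤ) by omega, show z + (k:ℤ) ≤ l by omega,
        show (1:ℤ) ≤ z + (k:ℤ) + 1 by omega, show z + (k:ℤ) + 1 ≤ l by omega, ?_⟩
      show |x - x| + |y - y| + |z + (k:ℤ) - (z + (k:ℤ) + 1)| = 1
      rw [show z + (k:ℤ) - (z + (k:ℤ) + 1) = -1 from by ring]
      simp
    · rw [ray_getLast?]
      have : ((x,y,z) : Vtx) + ((b - z).toNat) • (((0:ℤ),(0:ℤ),(1:ℤ)) : Vtx) = (x, y, b) := by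
        simp [Prod.ext_iff]; omega
      rw [this]
    · rw [ray_wcost]
      have hterm : ∀ k ∈ Finset.range (b - z).toNat,
          ecost ch cv cvia ((x,y,z) + k • (((0:ℤ),(0:ℤ),(1:ℤ)) : Vtx))
            ((x,y,z) + (k+1) • (((0:ℤ),(0:ℤ),(1:ℤ)) : Vtx)) = cvia (z + k) := by
        intro k _
        have e1 : ((x,y,z) : Vtx) + k • (((0:ℤ),(0:ℤ),(1:ℤ)) : Vtx) = (x, y, z + k) := by
          simp [Prod.ext_iff]
        have e2 : ((x,y,z) : Vtx) + (k+1) • (((0:ℤ),(0:ℤ),(1:ℤ)) : Vtx) = (x, y, z + k + 1) := by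
          simp [Prod.ext_iff]; ring
        rw [e1, e2]
        unfold ecost
        rw [if_neg (by simp), if_neg (by simp)]
        congr 1
        show min (z + (k:ℤ)) (z + (k:ℤ) + 1) = z + (k:ℤ)
        omega
      rw [Finset.sum_congr rfl hterm, sum_cvia_up cvia z hz1]
      have hb' : z + ((b - z).toNat : ℤ) = b := by omega
      rw [hb', Vv_eq_of_le cvia hc0 hz1 h hb2]
  · refine ⟨ray (0, 0, -1) (x, y, z) (z - b).toNat, ⟨ray_ne_nil _ _ _, ?_, ray_head? _ _ _, ?_⟩, ?_⟩
    · apply ray_chain'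
      intro k hk
      have hk' : (k : ℤ) < z - b := by omega
      have e1 : ((x,y,z) : Vtx) + k • (((0:ℤ),(0:ℤ),(-1:ℤ)) : Vtx) = (x, y, z - k) := by
        simp [Prod.ext_iff]; ring
      have e2 : ((x,y,z) : Vtx) + (k+1) • (((0:ℤ),(0:ℤ),(-1:ℤ)) : Vtx) = (x, y, z - k - 1) := by
        simp [Prod.ext_iff]; ring
      rw [e1, e2]
      refine ⟨show (1:ℤ) ≤ z - (k:ℤ) by omega, show z - (k:ℤ) ≤ l by omega,
        show (1:ℤ) ≤ z - (k:ℤ) - 1 by omega, show z - (k:ℤ) - 1 ≤ l by omega, ?_⟩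
      show |x - x| + |y - y| + |z - (k:ℤ) - (z - (k:ℤ) - 1)| = 1
      rw [show z - (k:ℤ) - (z - (k:ℤ) - 1) = 1 from by ring]
      simp
    · rw [ray_getLast?]
      have : ((x,y,z) : Vtx) + ((z - b).toNat) • (((0:ℤ),(0:ℤ),(-1:ℤ)) : Vtx) = (x, y, b) := by
        simp [Prod.ext_iff]; omega
      rw [this]
    · rw [ray_wcost]
      have hterm : ∀ k ∈ Finset.range (z - b).toNat,
          ecost ch cv cvia ((x,y,z) + k • (((0:ℤ),(0:ℤ),(-1:ℤ)) : Vtx))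
            ((x,y,z) + (k+1) • (((0:ℤ),(0:ℤ),(-1:ℤ)) : Vtx)) = cvia (z - k - 1) := by
        intro k _
        have e1 : ((x,y,z) : Vtx) + k • (((0:ℤ),(0:ℤ),(-1:ℤ)) : Vtx) = (x, y, z - k) := by
          simp [Prod.ext_iff]; ring
        have e2 : ((x,y,z) : Vtx) + (k+1) • (((0:ℤ),(0:ℤ),(-1:ℤ)) : Vtx) = (x, y, z - k - 1) := by
          simp [Prod.ext_iff]; ring
        rw [e1, e2]
        unfold ecost
        rw [if_neg (by simp), if_neg (by simp)]
        congr 1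
        show min (z - (k:ℤ)) (z - (k:ℤ) - 1) = z - (k:ℤ) - 1
        omega
      rw [Finset.sum_congr rfl hterm, sum_cvia_down cvia z _ (by omega)]
      have hb' : z - ((z - b).toNat : ℤ) = b := by omega
      rw [hb', Vv_comm, Vv_eq_of_le cvia hc0 hb1 h hz2]

end Model
section Formula

abbrev Rect : Type := (ℕ × ℕ) × (ℕ × ℕ) × ℤ
abbrev Idx : Type := Rect × (ℤ × ℤ) × Bool

/-- distance from `x` to the interval `[ξ i1, ξ i2]`. -/
def dxZ (ξ : ℕ → ℤ) (i1 i2 : ℕ) (x : ℤ) : ℤ := max 0 (max (ξ i1 - x) (x - ξ i2))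

/-- via cost of the layer tour `z → z1 → z2 → ζ` (if `o`) or `z → z2 → z1 → ζ`. -/
noncomputable def Ksum (cvia : ℤ → ℝ) (z ζ z1 z2 : ℤ) (o : Bool) : ℝ :=
  if o then Vv cvia z z1 + Vv cvia z1 z2 + Vv cvia z2 ζ
  else Vv cvia z z2 + Vv cvia z2 z1 + Vv cvia z1 ζ

/-- candidate distance value for index `t = (rectangle, (z1, z2), order)`. -/
noncomputable def fI (ch cv cvia : ℤ → ℝ) (ξ υ : ℕ → ℤ) (t : Idx) (v : Vtx) : ℝ :=
  (dxZ ξ t.1.1.1 t.1.1.2 v.1 : ℝ) * ch t.2.1.1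
    + (dxZ υ t.1.2.1.1 t.1.2.1.2 v.2.1 : ℝ) * cv t.2.1.2
    + Ksum cvia v.2.2 t.1.2.2 t.2.1.1 t.2.1.2 t.2.2

noncomputable def IdxS (l : ℤ) (R : Finset Rect) : Finset Idx :=
  R ×ˢ ((Finset.Icc 1 l ×ˢ Finset.Icc 1 l) ×ˢ (Finset.univ : Finset Bool))

lemma mem_IdxS {l : ℤ} {R : Finset Rect} {t : Idx} :
    t ∈ IdxS l R ↔ t.1 ∈ R ∧ (1 ≤ t.2.1.1 ∧ t.2.1.1 ≤ l) ∧ (1 ≤ t.2.1.2 ∧ t.2.1.2 ≤ l) := by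
  simp [IdxS, Finset.mem_product, Finset.mem_Icc]

variable {l : ℤ} {ch cv cvia : ℤ → ℝ} {ξ υ : ℕ → ℤ} {R : Finset Rect}

lemma DD_lipschitz
    (hch : ∀ w, 1 ≤ w → w ≤ l → 0 < ch w) (hcv : ∀ w, 1 ≤ w → w ≤ l → 0 < cv w)
    (hc0 : ∀ k, 1 ≤ k → k < l → 0 ≤ cvia k)
    (hne : (IdxS l R).Nonempty) {u v : Vtx} (huv : Adj l u v) :
    (IdxS l R).inf' hne (fun t => fI ch cv cvia ξ υ t u)
      ≤ (IdxS l R).inf' hne (fun t => fI ch cv cvia ξ υ t v) + ecost ch cv cvia u v := by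
  obtain ⟨t, ht, heq⟩ := Finset.exists_mem_eq_inf' hne (fun t => fI ch cv cvia ξ υ t v)
  obtain ⟨r, ⟨z1, z2⟩, o⟩ := t
  rw [heq]
  obtain ⟨hrR, hz1b, hz2b⟩ := mem_IdxS.mp ht
  obtain ⟨h1u, h2u, h1v, h2v, habs⟩ := huv
  have hcases : (u.2.1 = v.2.1 ∧ u.2.2 = v.2.2 ∧ (u.1 - v.1 = 1 ∨ u.1 - v.1 = -1)) ∨
      (u.1 = v.1 ∧ u.2.2 = v.2.2 ∧ (u.2.1 - v.2.1 = 1 ∨ u.2.1 - v.2.1 = -1)) ∨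
      (u.1 = v.1 ∧ u.2.1 = v.2.1 ∧ (u.2.2 - v.2.2 = 1 ∨ u.2.2 - v.2.2 = -1)) := by
    rcases abs_cases (u.1 - v.1) with ⟨e1, f1⟩ | ⟨e1, f1⟩ <;>
      rcases abs_cases (u.2.1 - v.2.1) with ⟨e2, f2⟩ | ⟨e2, f2⟩ <;>
        rcases abs_cases (u.2.2 - v.2.2) with ⟨e3, f3⟩ | ⟨e3, f3⟩ <;>
          rw [e1, e2, e3] at habs <;> omega
  rcases hcases with ⟨hy, hz, hx⟩ | ⟨hx, hz, hy⟩ | ⟨hx, hy, hz⟩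
  · -- horizontal edge
    have hec : ecost ch cv cvia u v = ch u.2.2 := by
      unfold ecost; rw [if_pos (by omega)]
    rw [hec]
    have hdx : dxZ ξ r.1.1 r.1.2 u.1 ≤ dxZ ξ r.1.1 r.1.2 v.1 + 1 := by
      unfold dxZ; omega
    have hdx0 : (0 : ℤ) ≤ dxZ ξ r.1.1 r.1.2 v.1 := by unfold dxZ; omega
    have hdxR : (dxZ ξ r.1.1 r.1.2 u.1 : ℝ) ≤ (dxZ ξ r.1.1 r.1.2 v.1 : ℝ) + 1 := by
      exact_mod_cast hdx
    have hdx0R : (0 : ℝ) ≤ (dxZ ξ r.1.1 r.1.2 v.1 : ℝ) := by exact_mod_cast hdx0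
    have hchz : 0 < ch u.2.2 := hch _ h1u h2u
    by_cases hcc : ch z1 ≤ ch u.2.2
    · refine le_trans (Finset.inf'_le _ ht) ?_
      unfold fI
      rw [hz] at hcc hchz
      rw [hy, hz]
      have hch1 : 0 < ch z1 := hch _ hz1b.1 hz1b.2
      nlinarith [hdxR, hdx0R, hch1, hcc]
    · push_neg at hcc
      have ht' : ((r, (u.2.2, z2), true) : Idx) ∈ IdxS l R :=
        mem_IdxS.mpr ⟨hrR, ⟨h1u, h2u⟩, hz2b⟩
      refine le_trans (Finset.inf'_le _ ht') ?_
      unfold fI Ksum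
      rw [hz] at hcc hchz
      rw [hy, hz]
      simp only [if_true]
      have hK : Vv cvia v.2.2 z2 + Vv cvia z2 r.2.2 ≤
          Ksum cvia v.2.2 r.2.2 z1 z2 o := by
        unfold Ksum
        cases o
        · simp only [Bool.false_eq_true, if_false]
          have := Vv_tri cvia z2 z1 r.2.2
          linarith
        · simp only [if_true]
          have := Vv_tri cvia v.2.2 z1 z2
          linarith
      unfold Ksum at hK
      rw [Vv_self]
      nlinarith [hdxR, hdx0R, hchz, hcc.le, hK]
  · -- vertical edge
    have hec : ecost ch cv cvia u v = cv u.2.2 := by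
      unfold ecost; rw [if_neg (by omega), if_pos (by omega)]
    rw [hec]
    have hdy : dxZ υ r.2.1.1 r.2.1.2 u.2.1 ≤ dxZ υ r.2.1.1 r.2.1.2 v.2.1 + 1 := by
      unfold dxZ; omega
    have hdy0 : (0 : ℤ) ≤ dxZ υ r.2.1.1 r.2.1.2 v.2.1 := by unfold dxZ; omega
    have hdyR : (dxZ υ r.2.1.1 r.2.1.2 u.2.1 : ℝ) ≤ (dxZ υ r.2.1.1 r.2.1.2 v.2.1 : ℝ) + 1 := by
      exact_mod_cast hdy
    have hdy0R : (0 : ℝ) ≤ (dxZ υ r.2.1.1 r.2.1.2 v.2.1 : ℝ) := by exact_mod_cast hdy0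
    have hcvz : 0 < cv u.2.2 := hcv _ h1u h2u
    by_cases hcc : cv z2 ≤ cv u.2.2
    · refine le_trans (Finset.inf'_le _ ht) ?_
      unfold fI
      rw [hz] at hcc hcvz
      rw [hx, hz]
      have hcv2 : 0 < cv z2 := hcv _ hz2b.1 hz2b.2
      nlinarith [hdyR, hdy0R, hcv2, hcc]
    · push_neg at hcc
      have ht' : ((r, (z1, u.2.2), false) : Idx) ∈ IdxS l R :=
        mem_IdxS.mpr ⟨hrR, hz1b, ⟨h1u, h2u⟩⟩
      refine le_trans (Finset.inf'_le _ ht') ?_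
      unfold fI Ksum
      rw [hz] at hcc hcvz
      rw [hx, hz]
      simp only [Bool.false_eq_true, if_false]
      have hK : Vv cvia v.2.2 z1 + Vv cvia z1 r.2.2 ≤
          Ksum cvia v.2.2 r.2.2 z1 z2 o := by
        unfold Ksum
        cases o
        · simp only [Bool.false_eq_true, if_false]
          have := Vv_tri cvia v.2.2 z2 z1
          linarith
        · simp only [if_true]
          have := Vv_tri cvia z1 z2 r.2.2
          linarith
      unfold Ksum at hK
      rw [Vv_self]
      nlinarith [hdyR, hdy0R, hcvz, hcc.le, hK]
  · -- via edge
    have habs1 : |u.2.2 - v.2.2| = 1 := by rcases hz with h | h <;> rw [h] <;> simp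
    have hec : ecost ch cv cvia u v = Vv cvia u.2.2 v.2.2 := by
      unfold ecost
      rw [if_neg (by omega), if_neg (by omega)]
      exact cvia_min_eq_Vv cvia hc0 h1u h2u h1v h2v habs1
    rw [hec]
    refine le_trans (Finset.inf'_le _ ht) ?_
    unfold fI
    rw [hx, hy]
    have hK : Ksum cvia u.2.2 r.2.2 z1 z2 o ≤
        Ksum cvia v.2.2 r.2.2 z1 z2 o + Vv cvia u.2.2 v.2.2 := by
      unfold Ksum
      cases o
      · simp only [Bool.false_eq_true, if_false]
        have := Vv_tri cvia u.2.2 v.2.2 z2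
        linarith
      · simp only [if_true]
        have := Vv_tri cvia u.2.2 v.2.2 z1
        linarith
    linarith

lemma walk_lb
    (hch : ∀ w, 1 ≤ w → w ≤ l → 0 < ch w) (hcv : ∀ w, 1 ≤ w → w ≤ l → 0 < cv w)
    (hc0 : ∀ k, 1 ≤ k → k < l → 0 ≤ cvia k) (hne : (IdxS l R).Nonempty) :
    ∀ (P : List Vtx) (u w : Vtx), IsWalkA (Adj l) P u w →
      (IdxS l R).inf' hne (fun t => fI ch cv cvia ξ υ t u)
        ≤ wcost (ecost ch cv cvia) P
          + (IdxS l R).inf' hne (fun t => fI ch cv cvia ξ υ t w) := by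
  intro P
  induction P with
  | nil => rintro u w ⟨h, -, -, -⟩; exact absurd rfl h
  | cons a L ih =>
    rintro u w ⟨-, hcn, hh, hl⟩
    simp only [List.head?_cons, Option.some.injEq] at hh
    subst hh
    cases L with
    | nil =>
      simp only [List.getLast?_singleton, Option.some.injEq] at hl
      subst hl
      simp [wcost]
    | cons b t =>
      rw [show List.Chain' (Adj l) (a :: b :: t) = List.IsChain (Adj l) (a :: b :: t) from rfl,
        List.isChain_cons_cons] at hcn
      have hadj : Adj l a b := hcn.1
      have hwalk : IsWalkA (Adj l) (b :: t) b w :=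
        ⟨by simp, hcn.2, rfl, by rw [← List.getLast?_cons_cons]; exact hl⟩
      have h1 := DD_lipschitz (ξ := ξ) (υ := υ) hch hcv hc0 hne hadj
      have h2 := ih b w hwalk
      have h3 : wcost (ecost ch cv cvia) (a :: b :: t)
          = ecost ch cv cvia a b + wcost (ecost ch cv cvia) (b :: t) := rfl
      rw [h3]
      linarith

lemma exists_walk_fI (hc0 : ∀ k, 1 ≤ k → k < l → 0 ≤ cvia k)
    (r : Rect) (z1 z2 : ℤ) (o : Bool)
    (hz1b : 1 ≤ z1 ∧ z1 ≤ l) (hz2b : 1 ≤ z2 ∧ z2 ≤ l)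
    (hζ : 1 ≤ r.2.2 ∧ r.2.2 ≤ l)
    (hxr : ξ r.1.1 ≤ ξ r.1.2) (hyr : υ r.2.1.1 ≤ υ r.2.1.2)
    (x y z : ℤ) (hz : 1 ≤ z ∧ z ≤ l) :
    ∃ P w, w ∈ GridRect ξ υ r.1.1 r.1.2 r.2.1.1 r.2.1.2 r.2.2 ∧
      IsWalkA (Adj l) P (x, y, z) w ∧
      wcost (ecost ch cv cvia) P = fI ch cv cvia ξ υ (r, (z1, z2), o) (x, y, z) := by
  set X1 := ξ r.1.1 with hX1
  set X2 := ξ r.1.2 with hX2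
  set Y1 := υ r.2.1.1 with hY1
  set Y2 := υ r.2.1.2 with hY2
  set tx := max X1 (min x X2) with htx
  set ty := max Y1 (min y Y2) with hty
  have hdx : |tx - x| = dxZ ξ r.1.1 r.1.2 x := by
    unfold dxZ
    rcases abs_cases (tx - x) with ⟨h1, h2⟩ | ⟨h1, h2⟩ <;> rw [h1] <;> omega
  have hdy : |ty - y| = dxZ υ r.2.1.1 r.2.1.2 y := by
    unfold dxZ
    rcases abs_cases (ty - y) with ⟨h1, h2⟩ | ⟨h1, h2⟩ <;> rw [h1] <;> omega
  have hwmem : ((tx, ty, r.2.2) : Vtx) ∈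
      GridRect ξ υ r.1.1 r.1.2 r.2.1.1 r.2.1.2 r.2.2 := by
    refine ⟨show X1 ≤ tx by omega, show tx ≤ X2 by omega,
      show Y1 ≤ ty by omega, show ty ≤ Y2 by omega, rfl⟩
  cases o
  · -- order false: z → z2 (vertical move) → z1 (horizontal move) → ζ
    obtain ⟨P1, hw1, hc1⟩ := exists_walkZ ch cv cvia hc0 x y z z2 hz.1 hz.2 hz2b.1 hz2b.2
    obtain ⟨P2, hw2, hc2⟩ := exists_walkY ch cv cvia x y z2 ty hz2b.1 hz2b.2
    obtain ⟨P3, hw3, hc3⟩ := exists_walkZ ch cv cvia hc0 x ty z2 z1 hz2b.1 hz2b.2 hz1b.1 hz1b.2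
    obtain ⟨P4, hw4, hc4⟩ := exists_walkX ch cv cvia x ty z1 tx hz1b.1 hz1b.2
    obtain ⟨P5, hw5, hc5⟩ := exists_walkZ ch cv cvia hc0 tx ty z1 r.2.2 hz1b.1 hz1b.2 hζ.1 hζ.2
    obtain ⟨hw12, hc12⟩ := walk_glue (c := ecost ch cv cvia) hw1 hw2
    obtain ⟨hw13, hc13⟩ := walk_glue (c := ecost ch cv cvia) hw12 hw3
    obtain ⟨hw14, hc14⟩ := walk_glue (c := ecost ch cv cvia) hw13 hw4
    obtain ⟨hw15, hc15⟩ := walk_glue (c := ecost ch cv cvia) hw14 hw5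
    refine ⟨_, _, hwmem, hw15, ?_⟩
    rw [hc15, hc14, hc13, hc12, hc1, hc2, hc3, hc4, hc5]
    unfold fI Ksum
    simp only [Bool.false_eq_true, if_false]
    rw [← hdx, ← hdy]
    push_cast
    ring
  · -- order true: z → z1 (horizontal move) → z2 (vertical move) → ζ
    obtain ⟨P1, hw1, hc1⟩ := exists_walkZ ch cv cvia hc0 x y z z1 hz.1 hz.2 hz1b.1 hz1b.2
    obtain ⟨P2, hw2, hc2⟩ := exists_walkX ch cv cvia x y z1 tx hz1b.1 hz1b.2
    obtain ⟨P3, hw3, hc3⟩ := exists_walkZ ch cv cvia hc0 tx y z1 z2 hz1b.1 hz1b.2 hz2b.1 hz2b.2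
    obtain ⟨P4, hw4, hc4⟩ := exists_walkY ch cv cvia tx y z2 ty hz2b.1 hz2b.2
    obtain ⟨P5, hw5, hc5⟩ := exists_walkZ ch cv cvia hc0 tx ty z2 r.2.2 hz2b.1 hz2b.2 hζ.1 hζ.2
    obtain ⟨hw12, hc12⟩ := walk_glue (c := ecost ch cv cvia) hw1 hw2
    obtain ⟨hw13, hc13⟩ := walk_glue (c := ecost ch cv cvia) hw12 hw3
    obtain ⟨hw14, hc14⟩ := walk_glue (c := ecost ch cv cvia) hw13 hw4
    obtain ⟨hw15, hc15⟩ := walk_glue (c := ecost ch cv cvia) hw14 hw5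
    refine ⟨_, _, hwmem, hw15, ?_⟩
    rw [hc15, hc14, hc13, hc12, hc1, hc2, hc3, hc4, hc5]
    unfold fI Ksum
    simp only [if_true]
    rw [← hdx, ← hdy]
    push_cast
    ring

end Formula
section Affine

/-- slope of the x-distance to `[ξ i1, ξ i2]` on the tile `i`. -/
def sxc (i i1 i2 : ℕ) : ℤ := if i2 ≤ i then 1 else if i + 1 ≤ i1 then -1 else 0

/-- offset of the x-distance to `[ξ i1, ξ i2]` on the tile `i`. -/
def txc (ξ : ℕ → ℤ) (i i1 i2 : ℕ) : ℤ :=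
  if i2 ≤ i then -ξ i2 else if i + 1 ≤ i1 then ξ i1 else 0

lemma sxc_cases (i i1 i2 : ℕ) : sxc i i1 i2 = 1 ∨ sxc i i1 i2 = -1 ∨ sxc i i1 i2 = 0 := by
  unfold sxc; split_ifs <;> simp

lemma dxZ_affine {p : ℕ} {ξ : ℕ → ℤ}
    (hξm : ∀ a b : ℕ, 1 ≤ a → a ≤ b → b ≤ p → ξ a ≤ ξ b)
    (i i1 i2 : ℕ) (hip : i ≤ p) (h1 : 1 ≤ i1) (h12 : i1 ≤ i2) (h2p : i2 ≤ p)
    (x : ℤ) (hx : inSeg p ξ i x) :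
    dxZ ξ i1 i2 x = sxc i i1 i2 * x + txc ξ i i1 i2 := by
  obtain ⟨hxa, hxb⟩ := hx
  unfold sxc txc dxZ
  by_cases hA : i2 ≤ i
  · rw [if_pos hA, if_pos hA]
    have hi0 : 1 ≤ i := le_trans (le_trans h1 h12) hA
    have hxge : ξ i ≤ x := by
      rcases hxa with h | h
      · exact absurd h (by omega)
      · exact h
    have e1 : ξ i2 ≤ ξ i := hξm i2 i (le_trans h1 h12) hA hip
    have e2 : ξ i1 ≤ ξ i2 := hξm i1 i2 h1 h12 h2p
    omega
  · rw [if_neg hA, if_neg hA]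
    by_cases hB : i + 1 ≤ i1
    · rw [if_pos hB, if_pos hB]
      have hxle : x ≤ ξ (i + 1) := by
        rcases hxb with h | h
        · exact absurd h (by omega)
        · exact h
      have e1 : ξ (i + 1) ≤ ξ i1 := hξm (i + 1) i1 (by omega) hB (le_trans h12 h2p)
      have e2 : ξ i1 ≤ ξ i2 := hξm i1 i2 h1 h12 h2p
      omega
    · rw [if_neg hB, if_neg hB]
      have hi0 : 1 ≤ i := by omega
      have hxge : ξ i ≤ x := by
        rcases hxa with h | h
        · exact absurd h (by omega)
        · exact h
      have hxle : x ≤ ξ (i + 1) := by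
        rcases hxb with h | h
        · exact absurd h (by omega)
        · exact h
      have e1 : ξ i1 ≤ ξ i := hξm i1 i h1 (by omega) hip
      have e2 : ξ (i + 1) ≤ ξ i2 := hξm (i + 1) i2 (by omega) (by omega) h2p
      omega

/-- the affine function associated to an index on a fixed tile `(i, j, z)`. -/
noncomputable def gTf (ch cv cvia : ℤ → ℝ) (ξ υ : ℕ → ℤ) (i j : ℕ) (z : ℤ)
    (t : Idx) : ℝ × ℝ × ℝ :=
  ((sxc i t.1.1.1 t.1.1.2 : ℝ) * ch t.2.1.1,
   (sxc j t.1.2.1.1 t.1.2.1.2 : ℝ) * cv t.2.1.2,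
   (txc ξ i t.1.1.1 t.1.1.2 : ℝ) * ch t.2.1.1 + (txc υ j t.1.2.1.1 t.1.2.1.2 : ℝ) * cv t.2.1.2
     + Ksum cvia z t.1.2.2 t.2.1.1 t.2.1.2 t.2.2)

lemma gTf_eval {p q : ℕ} {ξ υ : ℕ → ℤ} (ch cv cvia : ℤ → ℝ)
    (hξm : ∀ a b : ℕ, 1 ≤ a → a ≤ b → b ≤ p → ξ a ≤ ξ b)
    (hυm : ∀ a b : ℕ, 1 ≤ a → a ≤ b → b ≤ q → υ a ≤ υ b)
    (i j : ℕ) (z : ℤ) (hip : i ≤ p) (hjq : j ≤ q) (t : Idx)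
    (h1 : 1 ≤ t.1.1.1) (h12 : t.1.1.1 ≤ t.1.1.2) (h2p : t.1.1.2 ≤ p)
    (g1 : 1 ≤ t.1.2.1.1) (g12 : t.1.2.1.1 ≤ t.1.2.1.2) (g2q : t.1.2.1.2 ≤ q)
    (x y : ℤ) (hx : inSeg p ξ i x) (hy : inSeg q υ j y) :
    (gTf ch cv cvia ξ υ i j z t).1 * (x : ℝ) + (gTf ch cv cvia ξ υ i j z t).2.1 * (y : ℝ)
      + (gTf ch cv cvia ξ υ i j z t).2.2 = fI ch cv cvia ξ υ t (x, y, z) := by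
  unfold gTf fI
  rw [show ((x, y, z) : Vtx).1 = x from rfl]
  rw [show ((x, y, z) : Vtx).2.1 = y from rfl]
  rw [show ((x, y, z) : Vtx).2.2 = z from rfl]
  rw [dxZ_affine hξm i t.1.1.1 t.1.1.2 hip h1 h12 h2p x hx,
    dxZ_affine hυm j t.1.2.1.1 t.1.2.1.2 hjq g1 g12 g2q y hy]
  push_cast
  ring

/-- minimum offset among functions in `G` sharing coefficients `ab`. -/
noncomputable def dminF (G : Finset (ℝ × ℝ × ℝ)) (ab : ℝ × ℝ) : ℝ :=
  sInf ((((G.filter fun g => g.1 = ab.1 ∧ g.2.1 = ab.2).image fun g => g.2.2) : Finset ℝ) : Set ℝ)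

lemma dminF_le (G : Finset (ℝ × ℝ × ℝ)) {g : ℝ × ℝ × ℝ} (hg : g ∈ G) :
    dminF G (g.1, g.2.1) ≤ g.2.2 := by
  apply csInf_le ((Finset.finite_toSet _).bddBelow)
  simp only [Finset.coe_image, Set.mem_image, Finset.mem_coe, Finset.mem_filter]
  exact ⟨g, ⟨hg, rfl, rfl⟩, rfl⟩

lemma dminF_mem (G : Finset (ℝ × ℝ × ℝ)) {g : ℝ × ℝ × ℝ} (hg : g ∈ G) :
    ∃ g' ∈ G, g'.1 = g.1 ∧ g'.2.1 = g.2.1 ∧ g'.2.2 = dminF G (g.1, g.2.1) := by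
  have hne : ((((G.filter fun g' => g'.1 = g.1 ∧ g'.2.1 = g.2.1).image fun g' => g'.2.2) :
      Finset ℝ) : Set ℝ).Nonempty := by
    refine ⟨g.2.2, ?_⟩
    simp only [Finset.coe_image, Set.mem_image, Finset.mem_coe, Finset.mem_filter]
    exact ⟨g, ⟨hg, rfl, rfl⟩, rfl⟩
  have hmem := hne.csInf_mem (Finset.finite_toSet _)
  simp only [Finset.mem_coe, Finset.coe_image, Set.mem_image, Finset.mem_coe,
    Finset.mem_filter] at hmem
  obtain ⟨g', ⟨hg'G, he1, he2⟩, he3⟩ := hmem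
  refine ⟨g', hg'G, he1, he2, ?_⟩
  rw [he3]
  unfold dminF
  rw [Finset.coe_image]

/-- the deduplicated set of affine functions. -/
noncomputable def FF (G : Finset (ℝ × ℝ × ℝ)) : Finset (ℝ × ℝ × ℝ) :=
  (G.image fun g => (g.1, g.2.1)).image fun ab => (ab.1, ab.2, dminF G ab)

lemma FF_card (G : Finset (ℝ × ℝ × ℝ)) : (FF G).card ≤ (G.image fun g => (g.1, g.2.1)).card :=
  Finset.card_image_le

lemma FF_isLeast (G : Finset (ℝ × ℝ × ℝ)) (x y D : ℝ)
    (hlb : ∀ g ∈ G, D ≤ g.1 * x + g.2.1 * y + g.2.2)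
    (hex : ∃ g ∈ G, g.1 * x + g.2.1 * y + g.2.2 = D) :
    IsLeast { m : ℝ | ∃ f ∈ FF G, m = f.1 * x + f.2.1 * y + f.2.2 } D := by
  have key : ∀ f ∈ FF G, D ≤ f.1 * x + f.2.1 * y + f.2.2 := by
    intro f hf
    obtain ⟨ab, hab, rfl⟩ := Finset.mem_image.mp hf
    obtain ⟨g, hg, rfl⟩ := Finset.mem_image.mp hab
    obtain ⟨g', hg'G, he1, he2, he3⟩ := dminF_mem G hg
    have := hlb g' hg'G
    rw [he1, he2, he3] at this
    exact this
  constructor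
  · obtain ⟨g0, hg0, heval⟩ := hex
    have hab : (g0.1, g0.2.1) ∈ G.image fun g => (g.1, g.2.1) :=
      Finset.mem_image_of_mem _ hg0
    have hf0 : ((g0.1, g0.2.1, dminF G (g0.1, g0.2.1)) : ℝ × ℝ × ℝ) ∈ FF G := by
      have := Finset.mem_image_of_mem (fun ab => (ab.1, ab.2, dminF G ab)) hab
      exact this
    refine ⟨(g0.1, g0.2.1, dminF G (g0.1, g0.2.1)), hf0, ?_⟩
    have h1 : g0.1 * x + g0.2.1 * y + dminF G (g0.1, g0.2.1) ≤ D := by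
      have := dminF_le G hg0
      linarith [heval]
    have h2 : D ≤ g0.1 * x + g0.2.1 * y + dminF G (g0.1, g0.2.1) := key _ hf0
    exact (le_antisymm h1 h2).symm
  · rintro m ⟨f, hf, rfl⟩
    exact key f hf

end Affine

/-- In the simple cost model, let `T` be a nonempty finite union of
axis-parallel single-layer rectangles fitting the grid coordinates `ξ¹ ≤ … ≤ ξ^p`,
`υ¹ ≤ … ≤ υ^q` (this is `Consistent p q ξ υ l T`).  Then for every tile (given by
`i ∈ {0,…,p}`, `j ∈ {0,…,q}`, `z ∈ {1,…,l}`) there is a set `F` of at most `1 + 4l + 4l²`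
affine functions `ℝ² → ℝ` (each represented by its coefficient triple `(a, b, d)`,
i.e. `(x, y) ↦ a·x + b·y + d`) whose pointwise minimum at `(x, y)` equals the distance from
the vertex `(x, y, z)` of the tile to `T`. -/
theorem stmt11 (l : ℤ) (hl : 1 ≤ l) (ch cv cvia : ℤ → ℝ)
    (hch : ∀ z, 1 ≤ z → z ≤ l → 0 < ch z)
    (hcv : ∀ z, 1 ≤ z → z ≤ l → 0 < cv z)
    (hcvia : ∀ z, 1 ≤ z → z < l → 0 < cvia z)
    (p q : ℕ) (ξ υ : ℕ → ℤ)
    (hξ : ∀ i, 1 ≤ i → i < p → ξ i ≤ ξ (i + 1)) (hυ : ∀ j, 1 ≤ j → j < q → υ j ≤ υ (j + 1))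
    (T : Set Vtx) (hTne : T.Nonempty) (hTcon : Consistent p q ξ υ l T) :
    ∀ (i j : ℕ) (z : ℤ), i ≤ p → j ≤ q → 1 ≤ z → z ≤ l →
      ∃ F : Finset (ℝ × ℝ × ℝ),
        (F.card : ℤ) ≤ 1 + 4 * l + 4 * l ^ 2 ∧
        ∀ x y : ℤ, inSeg p ξ i x → inSeg q υ j y →
          IsLeast { m : ℝ | ∃ f ∈ F, m = f.1 * (x : ℝ) + f.2.1 * (y : ℝ) + f.2.2 }
            (gdistSetA (Adj l) (ecost ch cv cvia) (x, y, z) T) := by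
  intro i j z hip hjq hza hzb
  obtain ⟨R, hR, hTeq⟩ := hTcon
  have hc0 : ∀ k, 1 ≤ k → k < l → 0 ≤ cvia k := fun k h1 h2 => (hcvia k h1 h2).le
  -- R is nonempty
  obtain ⟨t0, ht0⟩ := hTne
  rw [hTeq] at ht0
  simp only [Set.mem_iUnion] at ht0
  obtain ⟨r0, hr0R, -⟩ := ht0
  have hIne : (IdxS l R).Nonempty :=
    ⟨(r0, (1, 1), true), mem_IdxS.mpr ⟨hr0R, ⟨le_refl 1, hl⟩, ⟨le_refl 1, hl⟩⟩⟩
  -- monotone grid coordinates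
  have hξm : ∀ a b : ℕ, 1 ≤ a → a ≤ b → b ≤ p → ξ a ≤ ξ b := by
    intro a b ha
    induction b with
    | zero => intro hab _; exact absurd hab (by omega)
    | succ n ihn =>
      intro hab hbp
      rcases Nat.lt_or_ge a (n + 1) with h | h
      · have h1 : ξ a ≤ ξ n := ihn (by omega) (by omega)
        have h2 : ξ n ≤ ξ (n + 1) := hξ n (by omega) (by omega)
        linarith
      · have : a = n + 1 := by omega
        rw [this]
  have hυm : ∀ a b : ℕ, 1 ≤ a → a ≤ b → b ≤ q → υ a ≤ υ b := by
    intro a b ha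
    induction b with
    | zero => intro hab _; exact absurd hab (by omega)
    | succ n ihn =>
      intro hab hbp
      rcases Nat.lt_or_ge a (n + 1) with h | h
      · have h1 : υ a ≤ υ n := ihn (by omega) (by omega)
        have h2 : υ n ≤ υ (n + 1) := hυ n (by omega) (by omega)
        linarith
      · have : a = n + 1 := by omega
        rw [this]
  -- the distance to T is zero-bounded on T
  have hDT : ∀ w, w ∈ T → (IdxS l R).inf' hIne (fun t => fI ch cv cvia ξ υ t w) ≤ 0 := by
    intro w hw
    rw [hTeq] at hw
    simp only [Set.mem_iUnion] at hw
    obtain ⟨r, hrR, hwr⟩ := hw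
    obtain ⟨hw1, hw2, hw3, hw4, hw5⟩ := hwr
    have hrb := hR r hrR
    have hmem : ((r, (w.2.2, w.2.2), true) : Idx) ∈ IdxS l R :=
      mem_IdxS.mpr ⟨hrR, ⟨show (1:ℤ) ≤ w.2.2 by omega, show w.2.2 ≤ l by omega⟩,
        ⟨show (1:ℤ) ≤ w.2.2 by omega, show w.2.2 ≤ l by omega⟩⟩
    refine le_trans (Finset.inf'_le _ hmem) ?_
    unfold fI Ksum
    have e1 : dxZ ξ r.1.1 r.1.2 w.1 = 0 := by unfold dxZ; omega
    have e2 : dxZ υ r.2.1.1 r.2.1.2 w.2.1 = 0 := by unfold dxZ; omega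
    rw [e1, e2, hw5]
    simp [Vv_self]
  -- distance = explicit formula
  have hgd : ∀ x y : ℤ, gdistSetA (Adj l) (ecost ch cv cvia) (x, y, z) T
      = (IdxS l R).inf' hIne (fun t => fI ch cv cvia ξ υ t (x, y, z)) := by
    intro x y
    have hlb : ∀ m ∈ { m : ℝ | ∃ P v, v ∈ T ∧ IsWalkA (Adj l) P (x, y, z) v ∧
        wcost (ecost ch cv cvia) P = m },
        (IdxS l R).inf' hIne (fun t => fI ch cv cvia ξ υ t (x, y, z)) ≤ m := by
      rintro m ⟨P, v, hvT, hwalk, rfl⟩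
      have h1 := walk_lb (ξ := ξ) (υ := υ) hch hcv hc0 hIne P (x, y, z) v hwalk
      have h2 := hDT v hvT
      linarith
    have hmem : (IdxS l R).inf' hIne (fun t => fI ch cv cvia ξ υ t (x, y, z)) ∈
        { m : ℝ | ∃ P v, v ∈ T ∧ IsWalkA (Adj l) P (x, y, z) v ∧
          wcost (ecost ch cv cvia) P = m } := by
      obtain ⟨t, ht, heq⟩ := Finset.exists_mem_eq_inf' hIne
        (fun t => fI ch cv cvia ξ υ t (x, y, z))
      obtain ⟨hrR, hw1b, hw2b⟩ := mem_IdxS.mp ht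
      have hrb := hR t.1 hrR
      obtain ⟨P, w, hwG, hwalk, hcost⟩ := exists_walk_fI (ξ := ξ) (υ := υ) hc0
        t.1 t.2.1.1 t.2.1.2 t.2.2 hw1b hw2b ⟨hrb.2.2.2.2.2.2.1, hrb.2.2.2.2.2.2.2⟩
        (hξm t.1.1.1 t.1.1.2 hrb.1 hrb.2.1 hrb.2.2.1)
        (hυm t.1.2.1.1 t.1.2.1.2 hrb.2.2.2.1 hrb.2.2.2.2.1 hrb.2.2.2.2.2.1)
        x y z ⟨hza, hzb⟩
      refine ⟨P, w, ?_, hwalk, ?_⟩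
      · rw [hTeq]
        exact Set.mem_biUnion hrR hwG
      · rw [hcost, heq]
    unfold gdistSetA
    exact le_antisymm (csInf_le ⟨_, hlb⟩ hmem) (le_csInf ⟨_, hmem⟩ hlb)
  -- the affine function family
  refine ⟨FF ((IdxS l R).image (gTf ch cv cvia ξ υ i j z)), ?_, ?_⟩
  · -- cardinality bound
    have hA := FF_card ((IdxS l R).image (gTf ch cv cvia ξ υ i j z))
    set G := (IdxS l R).image (gTf ch cv cvia ξ υ i j z) with hG
    set A : Finset ℝ := insert 0 (((Finset.Icc 1 l).image ch) ∪
      ((Finset.Icc 1 l).image fun w => -ch w)) with hAdef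
    set B : Finset ℝ := insert 0 (((Finset.Icc 1 l).image cv) ∪
      ((Finset.Icc 1 l).image fun w => -cv w)) with hBdef
    have hsub : (G.image fun g => (g.1, g.2.1)) ⊆ A ×ˢ B := by
      intro ab hab
      obtain ⟨g, hg, rfl⟩ := Finset.mem_image.mp hab
      obtain ⟨t, ht, rfl⟩ := Finset.mem_image.mp hg
      obtain ⟨-, hz1b, hz2b⟩ := mem_IdxS.mp ht
      rw [Finset.mem_product]
      constructor
      · show (gTf ch cv cvia ξ υ i j z t).1 ∈ A
        rw [hAdef]
        unfold gTf
        rcases sxc_cases i t.1.1.1 t.1.1.2 with h | h | h <;> rw [h] <;>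
          simp only [Finset.mem_insert, Finset.mem_union, Finset.mem_image, Finset.mem_Icc]
        · exact Or.inr (Or.inl ⟨t.2.1.1, ⟨hz1b.1, hz1b.2⟩, by push_cast; ring⟩)
        · exact Or.inr (Or.inr ⟨t.2.1.1, ⟨hz1b.1, hz1b.2⟩, by push_cast; ring⟩)
        · exact Or.inl (by push_cast; ring)
      · show (gTf ch cv cvia ξ υ i j z t).2.1 ∈ B
        rw [hBdef]
        unfold gTf
        rcases sxc_cases j t.1.2.1.1 t.1.2.1.2 with h | h | h <;> rw [h] <;>
          simp only [Finset.mem_insert, Finset.mem_union, Finset.mem_image, Finset.mem_Icc]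
        · exact Or.inr (Or.inl ⟨t.2.1.2, ⟨hz2b.1, hz2b.2⟩, by push_cast; ring⟩)
        · exact Or.inr (Or.inr ⟨t.2.1.2, ⟨hz2b.1, hz2b.2⟩, by push_cast; ring⟩)
        · exact Or.inl (by push_cast; ring)
    have hIcc : (Finset.Icc (1:ℤ) l).card = l.toNat := by
      rw [Int.card_Icc]
      congr 1
      ring
    have hAcard : A.card ≤ 1 + 2 * l.toNat := by
      refine le_trans (Finset.card_insert_le _ _) ?_
      have := Finset.card_union_le (((Finset.Icc (1:ℤ) l).image ch))
        (((Finset.Icc (1:ℤ) l).image fun w => -cv w))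
      calc (((Finset.Icc (1:ℤ) l).image ch) ∪
            ((Finset.Icc (1:ℤ) l).image fun w => -ch w)).card + 1
          ≤ (((Finset.Icc (1:ℤ) l).image ch).card
            + ((Finset.Icc (1:ℤ) l).image fun w => -ch w).card) + 1 :=
            by exact Nat.add_le_add_right (Finset.card_union_le _ _) 1
        _ ≤ ((Finset.Icc (1:ℤ) l).card + (Finset.Icc (1:ℤ) l).card) + 1 :=
            by exact Nat.add_le_add_right (add_le_add Finset.card_image_le Finset.card_image_le) 1
        _ = 1 + 2 * l.toNat := by rw [hIcc]; ring
    have hBcard : B.card ≤ 1 + 2 * l.toNat := by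
      refine le_trans (Finset.card_insert_le _ _) ?_
      calc (((Finset.Icc (1:ℤ) l).image cv) ∪
            ((Finset.Icc (1:ℤ) l).image fun w => -cv w)).card + 1
          ≤ (((Finset.Icc (1:ℤ) l).image cv).card
            + ((Finset.Icc (1:ℤ) l).image fun w => -cv w).card) + 1 :=
            by exact Nat.add_le_add_right (Finset.card_union_le _ _) 1
        _ ≤ ((Finset.Icc (1:ℤ) l).card + (Finset.Icc (1:ℤ) l).card) + 1 :=
            by exact Nat.add_le_add_right (add_le_add Finset.card_image_le Finset.card_image_le) 1
        _ = 1 + 2 * l.toNat := by rw [hIcc]; ring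
    have hfinal : (FF G).card ≤ (1 + 2 * l.toNat) * (1 + 2 * l.toNat) := by
      calc (FF G).card ≤ (G.image fun g => (g.1, g.2.1)).card := FF_card G
        _ ≤ (A ×ˢ B).card := Finset.card_le_card hsub
        _ = A.card * B.card := Finset.card_product _ _
        _ ≤ (1 + 2 * l.toNat) * (1 + 2 * l.toNat) :=
            Nat.mul_le_mul hAcard hBcard
    have hcast : ((l.toNat : ℤ)) = l := Int.toNat_of_nonneg (by omega)
    calc ((FF G).card : ℤ) ≤ ((1 + 2 * l.toNat) * (1 + 2 * l.toNat) : ℕ) := by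
          exact_mod_cast hfinal
      _ = (1 + 2 * l) * (1 + 2 * l) := by push_cast [hcast]; ring
      _ = 1 + 4 * l + 4 * l ^ 2 := by ring
  · -- the min property
    intro x y hx hy
    rw [hgd x y]
    apply FF_isLeast
    · -- lower bound
      intro g hg
      obtain ⟨t, ht, rfl⟩ := Finset.mem_image.mp hg
      obtain ⟨hrR, hz1b, hz2b⟩ := mem_IdxS.mp ht
      have hrb := hR t.1 hrR
      rw [gTf_eval ch cv cvia hξm hυm i j z hip hjq t hrb.1 hrb.2.1 hrb.2.2.1
        hrb.2.2.2.1 hrb.2.2.2.2.1 hrb.2.2.2.2.2.1 x y hx hy]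
      exact Finset.inf'_le _ ht
    · -- attained
      obtain ⟨t, ht, heq⟩ := Finset.exists_mem_eq_inf' hIne
        (fun t => fI ch cv cvia ξ υ t (x, y, z))
      obtain ⟨hrR, hz1b, hz2b⟩ := mem_IdxS.mp ht
      have hrb := hR t.1 hrR
      refine ⟨gTf ch cv cvia ξ υ i j z t, Finset.mem_image_of_mem _ ht, ?_⟩
      rw [gTf_eval ch cv cvia hξm hυm i j z hip hjq t hrb.1 hrb.2.1 hrb.2.2.1
        hrb.2.2.2.1 hrb.2.2.2.2.1 hrb.2.2.2.2.2.1 x y hx hy]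
      exact heq.symm
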